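/- Let $n \ge 1$ and $k > 1$ be integers. Then $\sum_{a=0}^{n-1} \sum_{j=0}^{k-1} \sum_{\substack{-a \le i_1 < \cdots < i_j \le -1 \\ 1 \le i'_1 < \cdots < i'_{k-1-j} \le n-1-a}} \frac{1}{i_1 \cdots i_j \cdot i'_1 \cdots i'_{k-1-j}} = 0$. -/

import Mathlib

open Finset Polynomial

noncomputable def chq (x : ℚ) (m : ℕ) : ℚ := (∏ i ∈ range m, (x - i)) / m.factorial

lemma desc_smeval (x : ℚ) : ∀ m : ℕ, (descPochhammer ℤ m).smeval x = ∏ i ∈ range m, (x - i)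
  | 0 => by simp [descPochhammer, Polynomial.smeval_one]
  | (m+1) => by
      rw [descPochhammer_succ_right, Polynomial.smeval_mul, desc_smeval x m,
        Polynomial.smeval_sub, Polynomial.smeval_X, Polynomial.smeval_natCast,
        Finset.prod_range_succ]
      simp

lemma ring_choose_eq (x : ℚ) (m : ℕ) : Ring.choose x m = chq x m := by
  have h := Ring.descPochhammer_eq_factorial_smul_choose x m
  rw [desc_smeval, nsmul_eq_mul] at h
  rw [chq, h]
  field_simp

lemma chq_vandermonde (x y : ℚ) (N : ℕ) :
    chq (x + y) N = ∑ ij ∈ antidiagonal N, chq x ij.1 * chq y ij.2 := by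
  simp only [← ring_choose_eq]
  exact Ring.add_choose_eq N (Commute.all x y)

lemma chq_neg_two (N : ℕ) : chq (-2) N = (-1)^N * (N+1) := by
  rw [chq]
  have : ∏ i ∈ range N, ((-2 : ℚ) - i) = (-1)^N * ∏ i ∈ range N, ((i:ℚ)+2) := by
    rw [Finset.pow_eq_prod_const, ← Finset.prod_mul_distrib]
    exact Finset.prod_congr rfl (fun i _ => by ring)
  rw [this]
  have h2 : ∀ N : ℕ, ∏ i ∈ range N, ((i:ℚ)+2) = (N+1).factorial := by
    intro N
    induction N with
    | zero => simp
    | succ n ih =>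
        have hf : ((n+1+1).factorial : ℚ) = ((n:ℚ)+2) * (n+1).factorial := by
          rw [Nat.factorial_succ]; push_cast; ring
        rw [Finset.prod_range_succ, ih, hf]; ring
  rw [h2 N]
  rw [Nat.factorial_succ]
  push_cast
  field_simp [Nat.factorial_ne_zero]

lemma prod_Icc_pos (m : ℕ) (f : ℤ → ℚ) : ∏ i ∈ Icc (1:ℤ) (m:ℤ), f i = ∏ j ∈ range m, f (j+1) := by
  refine Finset.prod_nbij' (fun i => (i-1).toNat) (fun j => (j:ℤ)+1) ?_ ?_ ?_ ?_ ?_ <;>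
    intros a ha <;> simp_all [Finset.mem_Icc, Finset.mem_range] <;>
    first
      | omega
      | (congr 1; omega)

lemma prod_Icc_neg (a : ℕ) (f : ℤ → ℚ) : ∏ i ∈ Icc (-(a:ℤ)) (-1), f i = ∏ j ∈ range a, f (-(j:ℤ)-1) := by
  refine Finset.prod_nbij' (fun i => (-i-1).toNat) (fun j => -(j:ℤ)-1) ?_ ?_ ?_ ?_ ?_ <;>
    intros a ha <;> simp_all [Finset.mem_Icc, Finset.mem_range] <;>
    first
      | omega
      | (congr 1; omega)


lemma prod_cast_fact : ∀ m : ℕ, ∏ j ∈ range m, ((j:ℚ)+1) = m.factorial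
  | 0 => by simp
  | (m+1) => by
      rw [Finset.prod_range_succ, prod_cast_fact m, Nat.factorial_succ]
      push_cast; ring

lemma prod_pos_eq (x : ℚ) (m : ℕ) :
    ∏ j ∈ range m, (1 + 1/((j:ℚ)+1) * x) = (-1)^m * chq (-x-1) m := by
  have h1 : ∀ j ∈ range m, (1 + 1/((j:ℚ)+1) * x) = ((j:ℚ)+1+x) / ((j:ℚ)+1) := by
    intro j _
    have hj : ((j:ℚ)+1) ≠ 0 := by positivity
    field_simp
  rw [Finset.prod_congr rfl h1, Finset.prod_div_distrib, prod_cast_fact, chq]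
  have h2 : (-1:ℚ)^m * ∏ j ∈ range m, (-x-1-j) = ∏ j ∈ range m, ((j:ℚ)+1+x) := by
    rw [Finset.pow_eq_prod_const, ← Finset.prod_mul_distrib]
    exact Finset.prod_congr rfl fun j _ => by ring
  rw [← mul_div_assoc, h2]

lemma prod_neg_eq (x : ℚ) (a : ℕ) :
    ∏ j ∈ range a, (1 + 1/(-(j:ℚ)-1) * x) = (-1)^a * chq (x-1) a := by
  have h1 : ∀ j ∈ range a, (1 + 1/(-(j:ℚ)-1) * x) = ((j:ℚ)+1-x) / ((j:ℚ)+1) := by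
    intro j _
    have hj : ((j:ℚ)+1) ≠ 0 := by positivity
    have hj' : (-(j:ℚ)-1) ≠ 0 := by intro h; apply hj; linarith
    field_simp
    ring
  rw [Finset.prod_congr rfl h1, Finset.prod_div_distrib, prod_cast_fact, chq]
  have h2 : (-1:ℚ)^a * ∏ j ∈ range a, (x-1-j) = ∏ j ∈ range a, ((j:ℚ)+1-x) := by
    rw [Finset.pow_eq_prod_const, ← Finset.prod_mul_distrib]
    exact Finset.prod_congr rfl fun j _ => by ring
  rw [← mul_div_assoc, h2]

lemma key (N : ℕ) (x : ℚ) :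
    ∑ a ∈ range (N+1), (∏ i ∈ Icc (-(a:ℤ)) (-1), (1 + (1/(i:ℚ)) * x)) *
      (∏ i ∈ Icc (1:ℤ) (((N+1:ℕ):ℤ)-1-a), (1 + (1/(i:ℚ)) * x)) = (N:ℚ)+1 := by
  have hterm : ∀ a ∈ range (N+1),
      (∏ i ∈ Icc (-(a:ℤ)) (-1), (1 + (1/(i:ℚ)) * x)) *
        (∏ i ∈ Icc (1:ℤ) (((N+1:ℕ):ℤ)-1-a), (1 + (1/(i:ℚ)) * x))
      = (-1)^N * (chq (x-1) a * chq (-x-1) (N-a)) := by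
    intro a ha
    simp only [Finset.mem_range] at ha
    have hle : a ≤ N := by omega
    have hcast : (((N+1:ℕ):ℤ)-1-a) = ((N - a : ℕ) : ℤ) := by push_cast; omega
    rw [hcast, prod_Icc_pos, prod_Icc_neg]
    have e1 : ∀ j ∈ range a, (1 + 1/((-(j:ℤ)-1 : ℤ):ℚ) * x) = (1 + 1/(-(j:ℚ)-1) * x) := by
      intro j _; push_cast; ring_nf
    have e2 : ∀ j ∈ range (N-a), (1 + 1/(((j:ℤ)+1 : ℤ):ℚ) * x) = (1 + 1/((j:ℚ)+1) * x) := by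
      intro j _; push_cast; ring_nf
    rw [Finset.prod_congr rfl e1, Finset.prod_congr rfl e2, prod_neg_eq, prod_pos_eq]
    have : (-1:ℚ)^a * (-1)^(N-a) = (-1)^N := by
      rw [← pow_add]; congr 1; omega
    calc (-1:ℚ)^a * chq (x-1) a * ((-1)^(N-a) * chq (-x-1) (N-a))
        = ((-1:ℚ)^a * (-1)^(N-a)) * (chq (x-1) a * chq (-x-1) (N-a)) := by ring
      _ = (-1)^N * (chq (x-1) a * chq (-x-1) (N-a)) := by rw [this]
  rw [Finset.sum_congr rfl hterm, ← Finset.mul_sum]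
  have hvdm : ∑ a ∈ range (N+1), chq (x-1) a * chq (-x-1) (N-a)
      = chq (-2) N := by
    have := chq_vandermonde (x-1) (-x-1) N
    rw [Nat.sum_antidiagonal_eq_sum_range_succ_mk] at this
    have hx : (x-1) + (-x-1) = (-2:ℚ) := by ring
    rw [hx] at this
    exact this.symm
  rw [hvdm, chq_neg_two, ← mul_assoc, ← mul_pow]
  norm_num

lemma coeff_prod_one_add (w : ℤ → ℚ) (s : Finset ℤ) : ∀ m : ℕ,
    (∏ i ∈ s, (1 + C (w i) * X)).coeff m = ∑ S ∈ powersetCard m s, ∏ i ∈ S, w i := by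
  classical
  induction s using Finset.induction_on with
  | empty =>
      intro m
      cases m with
      | zero => simp
      | succ m' =>
          rw [Finset.powersetCard_eq_empty.mpr (by simp)]
          simp [Polynomial.coeff_one]
  | @insert a s ha ih =>
      intro m
      rw [Finset.prod_insert ha, add_mul, one_mul, mul_assoc]
      cases m with
      | zero =>
          rw [Polynomial.coeff_add, Polynomial.coeff_C_mul, Polynomial.mul_coeff_zero]
          simp [ih 0]
      | succ m' =>
          rw [Polynomial.coeff_add, Polynomial.coeff_C_mul, Polynomial.coeff_X_mul,
            ih (m'+1), ih m']
          have hdisj : Disjoint (powersetCard (m'+1) s) ((powersetCard m' s).image (insert a)) := by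
            rw [Finset.disjoint_left]
            intro T hT hT'
            obtain ⟨S, hS, rfl⟩ := Finset.mem_image.mp hT'
            have hTs := (Finset.mem_powersetCard.mp hT).1
            exact ha (hTs (Finset.mem_insert_self a S))
          rw [Finset.powersetCard_succ_insert ha, Finset.sum_union hdisj]
          have hinj : ∑ T ∈ (powersetCard m' s).image (insert a), ∏ i ∈ T, w i
              = ∑ S ∈ powersetCard m' s, w a * ∏ i ∈ S, w i := by
            rw [Finset.sum_image]
            · refine Finset.sum_congr rfl fun S hS => ?_
              have haS : a ∉ S := fun h => ha ((Finset.mem_powersetCard.mp hS).1 h)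
              rw [Finset.prod_insert haS]
            · intro S hS T hT hST
              have haS : a ∉ S := fun h => ha ((Finset.mem_powersetCard.mp hS).1 h)
              have haT : a ∉ T := fun h => ha ((Finset.mem_powersetCard.mp hT).1 h)
              have := congrArg (fun (U : Finset ℤ) => U.erase a) hST
              simpa [Finset.erase_insert haS, Finset.erase_insert haT] using this
          rw [hinj, Finset.mul_sum]

lemma polyid (N : ℕ) :
    ∑ a ∈ range (N+1), ((∏ i ∈ Icc (-(a:ℤ)) (-1), (1 + C (1/(i:ℚ)) * X)) *
      (∏ i ∈ Icc (1:ℤ) (((N+1:ℕ):ℤ)-1-a), (1 + C (1/(i:ℚ)) * X))) = C ((N:ℚ)+1) := by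
  apply Polynomial.funext
  intro x
  rw [Polynomial.eval_finset_sum]
  simp only [Polynomial.eval_mul, Polynomial.eval_prod, Polynomial.eval_add,
    Polynomial.eval_one, Polynomial.eval_C, Polynomial.eval_X]
  simpa using key N x

theorem stmt12 (n k : ℕ) (hn : 1 ≤ n) (hk : 1 < k) :
    ∑ a ∈ Finset.range n, ∑ j ∈ Finset.range k,
      ∑ S ∈ Finset.powersetCard j (Finset.Icc (-(a : ℤ)) (-1)),
        ∑ S' ∈ Finset.powersetCard (k - 1 - j) (Finset.Icc (1 : ℤ) ((n : ℤ) - 1 - a)),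
          (∏ i ∈ S, (1 / (i : ℚ))) * (∏ i ∈ S', (1 / (i : ℚ)))
      = 0 := by
  obtain ⟨N, rfl⟩ : ∃ N, n = N + 1 := ⟨n-1, by omega⟩
  have h1 : ∀ a ∈ range (N+1),
      (∑ j ∈ Finset.range k,
        ∑ S ∈ Finset.powersetCard j (Finset.Icc (-(a : ℤ)) (-1)),
          ∑ S' ∈ Finset.powersetCard (k - 1 - j) (Finset.Icc (1 : ℤ) (((N+1:ℕ) : ℤ) - 1 - a)),
            (∏ i ∈ S, (1 / (i : ℚ))) * (∏ i ∈ S', (1 / (i : ℚ))))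
      = ((∏ i ∈ Icc (-(a:ℤ)) (-1), (1 + C (1/(i:ℚ)) * X)) *
          (∏ i ∈ Icc (1:ℤ) (((N+1:ℕ):ℤ)-1-a), (1 + C (1/(i:ℚ)) * X))).coeff (k-1) := by
    intro a _
    rw [Polynomial.coeff_mul, Nat.sum_antidiagonal_eq_sum_range_succ_mk]
    have hk1 : k - 1 + 1 = k := by omega
    rw [Nat.succ_eq_add_one, hk1]
    refine Finset.sum_congr rfl fun j _ => ?_
    rw [coeff_prod_one_add (fun i => 1/(i:ℚ)), coeff_prod_one_add (fun i => 1/(i:ℚ)),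
      Finset.sum_mul_sum]
  rw [Finset.sum_congr rfl h1, ← Polynomial.finset_sum_coeff, polyid, Polynomial.coeff_C,
    if_neg (by omega)]
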